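/- For any finite simple graph G=(V,E) equipped with nonnegative edge weights (λ_e)_{e∈E}, the weighted matching counts are log-concave: for every integer k ≥ 1, Z_{k-1}·Z_{k+1} ≤ Z_k², where Z_k = Σ_{M matching of G, |M|=k} ∏_{e∈M} λ_e. -/

import Mathlib

open scoped Classical
open scoped symmDiff
open Finset
set_option linter.unusedSectionVars false

/-- `M` is a matching of `G`: a finite set of edges of `G` that are pairwise vertex-disjoint. -/
def IsMatchingSet {α : Type*} (G : SimpleGraph α) (M : Finset (Sym2 α)) : Prop :=
  (∀ e ∈ M, e ∈ G.edgeSet) ∧ ∀ e ∈ M, ∀ f ∈ M, e ≠ f → ∀ v, v ∈ e → v ∉ f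

/-- `Zw G lam k` is the sum, over all matchings `M` of `G` with exactly `k` edges, of the
product of the edge weights `∏_{e ∈ M} lam e`. -/
noncomputable def Zw {α : Type*} [Fintype α] (G : SimpleGraph α) (lam : Sym2 α → ℝ)
    (k : ℕ) : ℝ :=
  ∑ M ∈ Finset.univ.filter (fun M : Finset (Sym2 α) => IsMatchingSet G M ∧ M.card = k),
    ∏ e ∈ M, lam e

namespace LogConcAux

variable {V : Type*} [Fintype V]

/-- Auxiliary graph whose edge set is (essentially) `D`. -/
def auxGraph (D : Finset (Sym2 V)) : SimpleGraph V where
  Adj x y := x ≠ y ∧ s(x, y) ∈ D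
  symm := ⟨fun x y ⟨h1, h2⟩ => ⟨h1.symm, by rwa [Sym2.eq_swap]⟩⟩
  loopless := ⟨fun x ⟨h1, _⟩ => h1 rfl⟩

noncomputable def vkey (D : Finset (Sym2 V)) (v : V) : ℕ :=
  Fintype.equivFin V (Quot.out ((auxGraph D).connectedComponentMk v))

noncomputable def ckey (D : Finset (Sym2 V)) (e : Sym2 V) : ℕ := vkey D e.out.1

lemma vkey_eq_iff {D : Finset (Sym2 V)} {v w : V} :
    vkey D v = vkey D w ↔ (auxGraph D).Reachable v w := by
  constructor
  · intro h
    apply SimpleGraph.ConnectedComponent.exact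
    unfold vkey at h
    have h2 := (Fintype.equivFin V).injective (Fin.val_injective h)
    have := congrArg (Quot.mk (auxGraph D).Reachable) h2
    simp [Quot.out_eq, SimpleGraph.connectedComponentMk] at this
    exact this
  · intro h
    unfold vkey
    rw [SimpleGraph.ConnectedComponent.sound h]

lemma vkey_eq_of_mem {D : Finset (Sym2 V)} {e : Sym2 V} {v w : V}
    (he : e ∈ D) (hd : ¬ e.IsDiag) (hv : v ∈ e) (hw : w ∈ e) : vkey D v = vkey D w := by
  induction e with
  | _ x y =>
    rw [Sym2.mk_isDiag_iff] at hd
    rw [Sym2.mem_iff] at hv hw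
    have hadj : (auxGraph D).Adj x y := ⟨hd, he⟩
    have hr : (auxGraph D).Reachable x y := hadj.reachable
    rcases hv with rfl | rfl <;> rcases hw with rfl | rfl <;>
      simp [vkey_eq_iff, hr, hr.symm]

lemma ckey_eq_vkey {D : Finset (Sym2 V)} {e : Sym2 V} {v : V}
    (he : e ∈ D) (hd : ¬ e.IsDiag) (hv : v ∈ e) : ckey D e = vkey D v :=
  vkey_eq_of_mem he hd (Sym2.out_fst_mem e) hv

lemma ckey_eq_ckey {D : Finset (Sym2 V)} {e f : Sym2 V} {v : V}
    (he : e ∈ D) (hde : ¬ e.IsDiag) (hf : f ∈ D) (hdf : ¬ f.IsDiag)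
    (hve : v ∈ e) (hvf : v ∈ f) : ckey D e = ckey D f := by
  rw [ckey_eq_vkey he hde hve, ckey_eq_vkey hf hdf hvf]

/-- a neighbour strictly closer to `r`. -/
lemma exists_desc (H : SimpleGraph V) {v r : V} (hne : v ≠ r) (h : H.Reachable v r) :
    ∃ u, H.Adj v u ∧ H.dist u r < H.dist v r := by
  obtain ⟨p, hp⟩ := h.exists_walk_length_eq_dist
  cases p with
  | nil => exact absurd rfl hne
  | cons h' p' =>
    refine ⟨_, h', ?_⟩
    have h1 := SimpleGraph.dist_le p'
    simp only [SimpleGraph.Walk.length_cons] at hp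
    omega


lemma sym2_out_mk (e : Sym2 V) : s(e.out.1, e.out.2) = e := by
  have h : s(e.out.1, e.out.2) = e := Quot.out_eq e
  simpa using h

lemma mem_iff_out {e : Sym2 V} {v : V} : v ∈ e ↔ v = e.out.1 ∨ v = e.out.2 := by
  conv_lhs => rw [← sym2_out_mk e]
  exact Sym2.mem_iff

lemma not_diag_out_ne {e : Sym2 V} (h : ¬ e.IsDiag) : e.out.1 ≠ e.out.2 := by
  intro hh
  apply h
  rw [← sym2_out_mk e, Sym2.mk_isDiag_iff]
  exact hh

lemma mem_pair_out {e : Sym2 V} {v : V} :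
    v ∈ ({e.out.1, e.out.2} : Finset V) ↔ v ∈ e := by
  simp [mem_iff_out]

noncomputable def Dset (A B : Finset (Sym2 V)) : Finset (Sym2 V) := A ∆ B

noncomputable def eps (A B : Finset (Sym2 V)) (t : ℕ) : ℤ :=
  (((B \ A).filter fun e => ckey (Dset A B) e = t).card : ℤ) -
  (((A \ B).filter fun e => ckey (Dset A B) e = t).card : ℤ)

noncomputable def keys (A B : Finset (Sym2 V)) : Finset ℕ :=
  (Dset A B).image (ckey (Dset A B))

noncomputable def qf (A B : Finset (Sym2 V)) (t : ℕ) : ℤ :=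
  ∑ s ∈ (keys A B).filter (· ≤ t), eps A B s

noncomputable def TT (A B : Finset (Sym2 V)) : Finset ℕ :=
  (keys A B).filter fun t => 1 ≤ qf A B t

noncomputable def flp (A B : Finset (Sym2 V)) : Finset (Sym2 V) :=
  if h : (TT A B).Nonempty then
    (Dset A B).filter fun e => (TT A B).min' h < ckey (Dset A B) e
  else ∅

noncomputable def psi (p : Finset (Sym2 V) × Finset (Sym2 V)) :
    Finset (Sym2 V) × Finset (Sym2 V) :=
  (p.1 ∆ flp p.1 p.2, p.2 ∆ flp p.1 p.2)

lemma mem_Dset {A B : Finset (Sym2 V)} {e : Sym2 V} :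
    e ∈ Dset A B ↔ (e ∈ A ∧ e ∉ B) ∨ (e ∈ B ∧ e ∉ A) := Finset.mem_symmDiff

variable {G : SimpleGraph V} {A B : Finset (Sym2 V)}

lemma D_edge (hA : IsMatchingSet G A) (hB : IsMatchingSet G B) {e : Sym2 V}
    (he : e ∈ Dset A B) : e ∈ G.edgeSet := by
  rcases mem_Dset.1 he with ⟨h, _⟩ | ⟨h, _⟩
  exacts [hA.1 e h, hB.1 e h]

lemma D_not_diag (hA : IsMatchingSet G A) (hB : IsMatchingSet G B) {e : Sym2 V}
    (he : e ∈ Dset A B) : ¬ e.IsDiag :=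
  G.not_isDiag_of_mem_edgeSet (D_edge hA hB he)


lemma eps_le_one (hA : IsMatchingSet G A) (hB : IsMatchingSet G B) (t : ℕ) :
    eps A B t ≤ 1 := by
  classical
  rw [eps]
  set D := Dset A B with hDdef
  set En := (B \ A).filter (fun e => ckey D e = t) with hEndef
  set Em := (A \ B).filter (fun e => ckey D e = t) with hEmdef
  rcases En.eq_empty_or_nonempty with h0 | ⟨e0, he0⟩
  · rw [h0]
    have : (0:ℤ) ≤ (Em.card : ℤ) := Int.natCast_nonneg _
    simp only [card_empty, Nat.cast_zero, zero_sub]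
    omega
  have hEnD : ∀ e ∈ En, e ∈ D ∧ e ∈ B ∧ e ∉ A ∧ ckey D e = t := by
    intro e he
    simp only [hEndef, mem_filter, mem_sdiff] at he
    exact ⟨mem_Dset.2 (Or.inr ⟨he.1.1, he.1.2⟩), he.1.1, he.1.2, he.2⟩
  have hdiag : ∀ e ∈ D, ¬ e.IsDiag := fun e he => D_not_diag hA hB he
  obtain ⟨he0D, he0B, he0A, he0k⟩ := hEnD e0 he0
  set H := auxGraph D with hH
  set C : H.ConnectedComponent := H.connectedComponentMk e0.out.1 with hC
  set r : V := Quot.out C with hr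
  have hrC : H.connectedComponentMk r = C := Quot.out_eq C
  set NV := En.biUnion (fun e => ({e.out.1, e.out.2} : Finset V)) with hNVdef
  have hmemNV : ∀ v, v ∈ NV ↔ ∃ e ∈ En, v ∈ e := by
    intro v
    simp only [hNVdef, mem_biUnion]
    constructor
    · rintro ⟨e, he, hv⟩
      exact ⟨e, he, mem_pair_out.1 hv⟩
    · rintro ⟨e, he, hv⟩
      exact ⟨e, he, mem_pair_out.2 hv⟩
  have hdisj : ∀ e ∈ En, ∀ f ∈ En, e ≠ f →
      Disjoint ({e.out.1, e.out.2} : Finset V) ({f.out.1, f.out.2} : Finset V) := by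
    intro e he f hf hef
    rw [Finset.disjoint_left]
    intro v hv hv2
    exact hB.2 e (hEnD e he).2.1 f (hEnD f hf).2.1 hef v (mem_pair_out.1 hv) (mem_pair_out.1 hv2)
  have hcard2 : ∀ e ∈ En, ({e.out.1, e.out.2} : Finset V).card = 2 := by
    intro e he
    have hne : e.out.1 ≠ e.out.2 := not_diag_out_ne (hdiag e (hEnD e he).1)
    rw [card_insert_of_notMem (by simp [hne]), card_singleton]
  have hNVcard : NV.card = 2 * En.card := by
    rw [hNVdef, card_biUnion hdisj, Finset.sum_congr rfl hcard2, sum_const, smul_eq_mul, mul_comm]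
  have hNVcomp : ∀ v ∈ NV, vkey D v = t := by
    intro v hv
    obtain ⟨e, he, hve⟩ := (hmemNV v).1 hv
    obtain ⟨heD, -, -, hek⟩ := hEnD e he
    rw [← hek, ckey_eq_vkey heD (hdiag e heD) hve]
  have hvkr : vkey D r = t := by
    rw [← he0k]
    show _ = vkey D e0.out.1
    unfold vkey
    rw [hrC]
  set pick : V → V := fun v =>
    if h : ∃ u, H.Adj v u ∧ H.dist u r < H.dist v r then h.choose else v with hpick
  have hpickspec : ∀ v ∈ NV.erase r, H.Adj v (pick v) ∧ H.dist (pick v) r < H.dist v r := by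
    intro v hv
    obtain ⟨hvne, hvNV⟩ := Finset.mem_erase.1 hv
    have hreach : H.Reachable v r := vkey_eq_iff.1 (by rw [hNVcomp v hvNV, hvkr])
    have hex := exists_desc H hvne hreach
    rw [hpick]
    simp only [dif_pos hex]
    exact hex.choose_spec
  have hmaps : ∀ v ∈ NV.erase r, s(v, pick v) ∈ D.filter (fun e => ckey D e = t) := by
    intro v hv
    have hsp := hpickspec v hv
    have heD : s(v, pick v) ∈ D := hsp.1.2
    refine mem_filter.2 ⟨heD, ?_⟩
    rw [ckey_eq_vkey heD (hdiag _ heD) (by simp : v ∈ s(v, pick v))]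
    exact hNVcomp v (mem_erase.1 hv).2
  have hinj : Set.InjOn (fun v => s(v, pick v)) (NV.erase r) := by
    intro v hv w hw heq
    simp only at heq
    rcases Sym2.eq_iff.1 heq with ⟨h1, h2⟩ | ⟨h1, h2⟩
    · exact h1
    · exfalso
      have hv' := (hpickspec v (Finset.mem_coe.1 hv)).2
      have hw' := (hpickspec w (Finset.mem_coe.1 hw)).2
      rw [h2] at hv'
      rw [← h1] at hw'
      exact absurd hv' (not_lt.2 (le_of_lt hw'))
  have hle : (NV.erase r).card ≤ (D.filter (fun e => ckey D e = t)).card :=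
    Finset.card_le_card_of_injOn _ hmaps hinj
  have hsplit : (D.filter (fun e => ckey D e = t)).card ≤ Em.card + En.card := by
    have hsub : D.filter (fun e => ckey D e = t) ⊆ Em ∪ En := by
      intro e he
      rcases mem_filter.1 he with ⟨heD, hek⟩
      rcases mem_Dset.1 heD with ⟨h1, h2⟩ | ⟨h1, h2⟩
      · exact mem_union_left _ (mem_filter.2 ⟨mem_sdiff.2 ⟨h1, h2⟩, hek⟩)
      · exact mem_union_right _ (mem_filter.2 ⟨mem_sdiff.2 ⟨h1, h2⟩, hek⟩)
    calc (D.filter (fun e => ckey D e = t)).card ≤ (Em ∪ En).card := card_le_card hsub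
      _ ≤ Em.card + En.card := card_union_le _ _
  have h1 : NV.card - 1 ≤ (NV.erase r).card := Finset.pred_card_le_card_erase
  have hEn1 : 1 ≤ En.card := card_pos.2 ⟨e0, he0⟩
  have hfin : En.card ≤ Em.card + 1 := by omega
  push_cast
  omega


lemma sdiffBA_subset_D {e : Sym2 V} (h : e ∈ B \ A) : e ∈ Dset A B :=
  mem_Dset.2 (Or.inr ⟨(mem_sdiff.1 h).1, (mem_sdiff.1 h).2⟩)

lemma sdiffAB_subset_D {e : Sym2 V} (h : e ∈ A \ B) : e ∈ Dset A B :=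
  mem_Dset.2 (Or.inl ⟨(mem_sdiff.1 h).1, (mem_sdiff.1 h).2⟩)

lemma sum_eps (hcard : B.card = A.card + 2) :
    ∑ t ∈ keys A B, eps A B t = 2 := by
  classical
  have h1 : (B \ A).card
      = ∑ t ∈ keys A B, ((B \ A).filter (fun e => ckey (Dset A B) e = t)).card :=
    Finset.card_eq_sum_card_fiberwise (fun e he => mem_image_of_mem _ (sdiffBA_subset_D he))
  have h2 : (A \ B).card
      = ∑ t ∈ keys A B, ((A \ B).filter (fun e => ckey (Dset A B) e = t)).card :=
    Finset.card_eq_sum_card_fiberwise (fun e he => mem_image_of_mem _ (sdiffAB_subset_D he))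
  have h3 : ∑ t ∈ keys A B, eps A B t = ((B \ A).card : ℤ) - ((A \ B).card : ℤ) := by
    unfold eps
    rw [Finset.sum_sub_distrib]
    push_cast [h1, h2]
    ring
  have h4 : (B \ A).card + (B ∩ A).card = B.card := card_sdiff_add_card_inter B A
  have h5 : (A \ B).card + (A ∩ B).card = A.card := card_sdiff_add_card_inter A B
  have h6 : (B ∩ A).card = (A ∩ B).card := by rw [inter_comm]
  rw [h3]
  omega

lemma TT_nonempty (hcard : B.card = A.card + 2) : (TT A B).Nonempty := by
  classical
  have hBA : (B \ A).Nonempty := by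
    rw [← card_pos]
    have h4 := card_sdiff_add_card_inter B A
    have h5 : (B ∩ A).card ≤ A.card := card_le_card inter_subset_right
    omega
  obtain ⟨e, he⟩ := hBA
  have hkeys : (keys A B).Nonempty := ⟨_, mem_image_of_mem _ (sdiffBA_subset_D he)⟩
  refine ⟨(keys A B).max' hkeys, mem_filter.2 ⟨max'_mem _ _, ?_⟩⟩
  have hfull : (keys A B).filter (· ≤ (keys A B).max' hkeys) = keys A B :=
    filter_true_of_mem (fun t ht => le_max' _ _ ht)
  rw [qf, hfull, sum_eps hcard]
  norm_num

section Kappa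

variable (hT : (TT A B).Nonempty)

lemma q_lt_nonpos {t : ℕ} (ht : t ∈ keys A B) (hlt : t < (TT A B).min' hT) :
    qf A B t ≤ 0 := by
  by_contra h
  have h1 : 1 ≤ qf A B t := by omega
  have : t ∈ TT A B := mem_filter.2 ⟨ht, h1⟩
  exact absurd ((TT A B).min'_le t this) (not_le.2 hlt)

lemma sum_lt_nonpos : ∑ s ∈ (keys A B).filter (· < (TT A B).min' hT), eps A B s ≤ 0 := by
  set κ := (TT A B).min' hT with hκ
  rcases ((keys A B).filter (· < κ)).eq_empty_or_nonempty with h | h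
  · rw [h]; simp
  · set t0 := ((keys A B).filter (· < κ)).max' h with ht0def
    have ht0 := ((keys A B).filter (· < κ)).max'_mem h
    have hset : (keys A B).filter (· ≤ t0) = (keys A B).filter (· < κ) := by
      ext s
      simp only [mem_filter]
      constructor
      · rintro ⟨hs, hle⟩
        exact ⟨hs, lt_of_le_of_lt hle (mem_filter.1 ht0).2⟩
      · rintro ⟨hs, hlt⟩
        exact ⟨hs, ((keys A B).filter (· < κ)).le_max' s (mem_filter.2 ⟨hs, hlt⟩)⟩
    have := q_lt_nonpos hT (mem_filter.1 ht0).1 (mem_filter.1 ht0).2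
    rw [qf, hset] at this
    exact this

lemma q_min_eq_one (hA : IsMatchingSet G A) (hB : IsMatchingSet G B) :
    qf A B ((TT A B).min' hT) = 1 := by
  set κ := (TT A B).min' hT with hκ
  have hκT := (TT A B).min'_mem hT
  have hκkeys : κ ∈ keys A B := (mem_filter.1 hκT).1
  have h1 : 1 ≤ qf A B κ := (mem_filter.1 hκT).2
  have hsplitset : (keys A B).filter (· ≤ κ) = ((keys A B).filter (· < κ)) ∪ {κ} := by
    ext s
    simp only [mem_filter, mem_union, mem_singleton]
    constructor
    · rintro ⟨hs, hle⟩
      rcases lt_or_eq_of_le hle with h | h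
      exacts [Or.inl ⟨hs, h⟩, Or.inr h]
    · rintro (⟨hs, hlt⟩ | rfl)
      exacts [⟨hs, le_of_lt hlt⟩, ⟨hκkeys, le_refl _⟩]
  have hdisj : Disjoint ((keys A B).filter (· < κ)) {κ} := by
    simp only [disjoint_singleton_right, mem_filter]
    intro hcon
    exact absurd hcon.2 (lt_irrefl κ)
  have heq : qf A B κ = (∑ s ∈ (keys A B).filter (· < κ), eps A B s) + eps A B κ := by
    rw [qf, hsplitset, sum_union hdisj, sum_singleton]
  have h2 : ∑ s ∈ (keys A B).filter (· < κ), eps A B s ≤ 0 := sum_lt_nonpos hT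
  have h3 := eps_le_one hA hB κ
  omega

lemma sum_gt_eq_one (hA : IsMatchingSet G A) (hB : IsMatchingSet G B)
    (hcard : B.card = A.card + 2) :
    ∑ t ∈ (keys A B).filter (fun t => (TT A B).min' hT < t), eps A B t = 1 := by
  have hsplit := Finset.sum_filter_add_sum_filter_not (keys A B)
    (fun t => t ≤ (TT A B).min' hT) (eps A B)
  have hnot : (keys A B).filter (fun t => ¬ t ≤ (TT A B).min' hT)
      = (keys A B).filter (fun t => (TT A B).min' hT < t) := by
    apply filter_congr
    intro t ht
    exact not_le
  have hq := q_min_eq_one hT hA hB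
  rw [qf] at hq
  rw [hnot, sum_eps hcard] at hsplit
  omega

end Kappa


section Flip

lemma flp_eq (hT : (TT A B).Nonempty) : flp A B = (Dset A B).filter
    (fun e => (TT A B).min' hT < ckey (Dset A B) e) := dif_pos hT

lemma flp_subset (hT : (TT A B).Nonempty) : flp A B ⊆ Dset A B := by
  rw [flp_eq hT]
  exact filter_subset _ _

lemma mem_flp_iff (hT : (TT A B).Nonempty) {e : Sym2 V} (he : e ∈ Dset A B) :
    e ∈ flp A B ↔ (TT A B).min' hT < ckey (Dset A B) e := by
  rw [flp_eq hT, mem_filter]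
  exact ⟨fun h => h.2, fun h => ⟨he, h⟩⟩

lemma matching_symmdiff (hT : (TT A B).Nonempty)
    (hA : IsMatchingSet G A) (hB : IsMatchingSet G B) :
    IsMatchingSet G (A ∆ flp A B) ∧ IsMatchingSet G (B ∆ flp A B) := by
  classical
  have hFD : flp A B ⊆ Dset A B := flp_subset hT
  have hdiag : ∀ e ∈ Dset A B, ¬e.IsDiag := fun e he => D_not_diag hA hB he
  -- a generic helper for both sides
  have main : ∀ (S S' : Finset (Sym2 V)), IsMatchingSet G S → IsMatchingSet G S' →
      (∀ e ∈ Dset A B, e ∉ S → e ∈ S') → (∀ e, e ∈ S → e ∉ S' → e ∈ Dset A B) →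
      IsMatchingSet G (S ∆ flp A B) := by
    intro S S' hS hS' hDS hSD
    constructor
    · intro e he
      rcases Finset.mem_symmDiff.1 he with ⟨h1, -⟩ | ⟨h1, -⟩
      · exact hS.1 e h1
      · exact D_edge hA hB (hFD h1)
    · intro e he f hf hef v hve hvf
      have key : ∀ a b : Sym2 V, a ∈ S → a ∉ flp A B → b ∈ flp A B → b ∉ S →
          a ≠ b → v ∈ a → v ∈ b → False := by
        intro a b haS haF hbF hbS hab hva hvb
        have hbD := hFD hbF
        have hbS' : b ∈ S' := hDS b hbD hbS
        by_cases haS' : a ∈ S'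
        · exact hS'.2 a haS' b hbS' hab v hva hvb
        · have haD : a ∈ Dset A B := hSD a haS haS'
          have hk : ckey (Dset A B) a = ckey (Dset A B) b :=
            ckey_eq_ckey haD (hdiag _ haD) hbD (hdiag _ hbD) hva hvb
          apply haF
          rw [mem_flp_iff hT haD, hk, ← mem_flp_iff hT hbD]
          exact hbF
      rcases Finset.mem_symmDiff.1 he with ⟨heS, heF⟩ | ⟨heF, heS⟩ <;>
        rcases Finset.mem_symmDiff.1 hf with ⟨hfS, hfF⟩ | ⟨hfF, hfS⟩
      · exact hS.2 e heS f hfS hef v hve hvf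
      · exact key e f heS heF hfF hfS hef hve hvf
      · exact key f e hfS hfF heF heS hef.symm hvf hve
      · exact hS'.2 e (hDS e (hFD heF) heS) f (hDS f (hFD hfF) hfS) hef v hve hvf
  constructor
  · exact main A B hA hB (fun e he hne => ((mem_Dset.1 he).resolve_left (fun h => hne h.1)).1)
      (fun e h1 h2 => mem_Dset.2 (Or.inl ⟨h1, h2⟩))
  · exact main B A hB hA (fun e he hne => ((mem_Dset.1 he).resolve_right (fun h => hne h.1)).1)
      (fun e h1 h2 => mem_Dset.2 (Or.inr ⟨h1, h2⟩))


lemma card_filter_gt (S : Finset (Sym2 V)) (hS : ∀ e ∈ S, e ∈ Dset A B) (κ : ℕ) :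
    ((S.filter (fun e => κ < ckey (Dset A B) e)).card : ℤ)
      = ∑ t ∈ (keys A B).filter (fun t => κ < t),
          ((S.filter (fun e => ckey (Dset A B) e = t)).card : ℤ) := by
  classical
  have hfib := Finset.card_eq_sum_card_fiberwise
    (f := fun e => ckey (Dset A B) e)
    (s := S.filter (fun e => κ < ckey (Dset A B) e))
    (t := (keys A B).filter (fun t => κ < t))
    (fun e he => mem_filter.2
      ⟨mem_image_of_mem _ (hS e (mem_filter.1 he).1), (mem_filter.1 he).2⟩)
  have hfix : ∀ t ∈ (keys A B).filter (fun t => κ < t),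
      ((S.filter (fun e => κ < ckey (Dset A B) e)).filter
        (fun e => ckey (Dset A B) e = t))
      = S.filter (fun e => ckey (Dset A B) e = t) := by
    intro t ht
    ext e
    simp only [mem_filter]
    constructor
    · rintro ⟨⟨h1, _⟩, h3⟩
      exact ⟨h1, h3⟩
    · rintro ⟨h1, h3⟩
      exact ⟨⟨h1, h3 ▸ (mem_filter.1 ht).2⟩, h3⟩
  rw [hfib]
  push_cast
  apply Finset.sum_congr rfl
  intro t ht
  exact congrArg (fun s => ((Finset.card s : ℕ) : ℤ)) (hfix t ht)

lemma sdiff_key_diff (hT : (TT A B).Nonempty) (hA : IsMatchingSet G A)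
    (hB : IsMatchingSet G B) (hcard : B.card + 0 = A.card + 2) :
    (((B \ A).filter (fun e => (TT A B).min' hT < ckey (Dset A B) e)).card : ℤ)
      - (((A \ B).filter (fun e => (TT A B).min' hT < ckey (Dset A B) e)).card : ℤ) = 1 := by
  classical
  have hsum := sum_gt_eq_one hT hA hB (by omega)
  have hn := card_filter_gt (A := A) (B := B) (B \ A)
    (fun e he => sdiffBA_subset_D he) ((TT A B).min' hT)
  have hm := card_filter_gt (A := A) (B := B) (A \ B)
    (fun e he => sdiffAB_subset_D he) ((TT A B).min' hT)
  rw [hn, hm, ← Finset.sum_sub_distrib, ← hsum]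
  apply Finset.sum_congr rfl
  intro t ht
  rw [eps]

lemma flp_sdiff_left (hT : (TT A B).Nonempty) (hA : IsMatchingSet G A)
    (hB : IsMatchingSet G B) :
    flp A B \ A = (B \ A).filter (fun e => (TT A B).min' hT < ckey (Dset A B) e) := by
  ext e
  simp only [mem_sdiff, mem_filter]
  constructor
  · rintro ⟨heF, heA⟩
    have heD := flp_subset hT heF
    have heB : e ∈ B := ((mem_Dset.1 heD).resolve_left (fun h => heA h.1)).1
    exact ⟨⟨heB, heA⟩, (mem_flp_iff hT heD).1 heF⟩
  · rintro ⟨⟨heB, heA⟩, hgt⟩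
    have heD : e ∈ Dset A B := mem_Dset.2 (Or.inr ⟨heB, heA⟩)
    exact ⟨(mem_flp_iff hT heD).2 hgt, heA⟩

lemma flp_inter_left (hT : (TT A B).Nonempty) (hA : IsMatchingSet G A)
    (hB : IsMatchingSet G B) :
    A ∩ flp A B = (A \ B).filter (fun e => (TT A B).min' hT < ckey (Dset A B) e) := by
  ext e
  simp only [mem_inter, mem_sdiff, mem_filter]
  constructor
  · rintro ⟨heA, heF⟩
    have heD := flp_subset hT heF
    have heB : e ∉ B := by
      rcases mem_Dset.1 heD with h | h
      · exact h.2
      · exact absurd heA h.2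
    exact ⟨⟨heA, heB⟩, (mem_flp_iff hT heD).1 heF⟩
  · rintro ⟨⟨heA, heB⟩, hgt⟩
    have heD : e ∈ Dset A B := mem_Dset.2 (Or.inl ⟨heA, heB⟩)
    exact ⟨heA, (mem_flp_iff hT heD).2 hgt⟩

lemma flp_sdiff_right (hT : (TT A B).Nonempty) (hA : IsMatchingSet G A)
    (hB : IsMatchingSet G B) :
    flp A B \ B = (A \ B).filter (fun e => (TT A B).min' hT < ckey (Dset A B) e) := by
  ext e
  simp only [mem_sdiff, mem_filter]
  constructor
  · rintro ⟨heF, heB⟩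
    have heD := flp_subset hT heF
    have heA : e ∈ A := ((mem_Dset.1 heD).resolve_right (fun h => heB h.1)).1
    exact ⟨⟨heA, heB⟩, (mem_flp_iff hT heD).1 heF⟩
  · rintro ⟨⟨heA, heB⟩, hgt⟩
    have heD : e ∈ Dset A B := mem_Dset.2 (Or.inl ⟨heA, heB⟩)
    exact ⟨(mem_flp_iff hT heD).2 hgt, heB⟩

lemma flp_inter_right (hT : (TT A B).Nonempty) (hA : IsMatchingSet G A)
    (hB : IsMatchingSet G B) :
    B ∩ flp A B = (B \ A).filter (fun e => (TT A B).min' hT < ckey (Dset A B) e) := by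
  ext e
  simp only [mem_inter, mem_sdiff, mem_filter]
  constructor
  · rintro ⟨heB, heF⟩
    have heD := flp_subset hT heF
    have heA : e ∉ A := by
      rcases mem_Dset.1 heD with h | h
      · exact absurd heB h.2
      · exact h.2
    exact ⟨⟨heB, heA⟩, (mem_flp_iff hT heD).1 heF⟩
  · rintro ⟨⟨heB, heA⟩, hgt⟩
    have heD : e ∈ Dset A B := mem_Dset.2 (Or.inr ⟨heB, heA⟩)
    exact ⟨heB, (mem_flp_iff hT heD).2 hgt⟩

lemma symmdiff_eq_union {S F : Finset (Sym2 V)} : S ∆ F = (S \ F) ∪ (F \ S) := by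
  ext e
  simp only [Finset.mem_symmDiff, mem_union, mem_sdiff]

lemma cards_psi (hT : (TT A B).Nonempty) (hA : IsMatchingSet G A)
    (hB : IsMatchingSet G B) (hcard : B.card = A.card + 2) :
    (A ∆ flp A B).card = A.card + 1 ∧ (B ∆ flp A B).card + 1 = B.card := by
  classical
  have hdiff := sdiff_key_diff hT hA hB (by omega)
  have h1 : (A \ flp A B).card + (A ∩ flp A B).card = A.card :=
    card_sdiff_add_card_inter A (flp A B)
  have h2 : (B \ flp A B).card + (B ∩ flp A B).card = B.card :=
    card_sdiff_add_card_inter B (flp A B)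
  have e1 : (A ∩ flp A B).card
      = ((A \ B).filter (fun e => (TT A B).min' hT < ckey (Dset A B) e)).card := by
    rw [flp_inter_left hT hA hB]
  have e2 : (B ∩ flp A B).card
      = ((B \ A).filter (fun e => (TT A B).min' hT < ckey (Dset A B) e)).card := by
    rw [flp_inter_right hT hA hB]
  have c1 : (A ∆ flp A B).card = (A \ flp A B).card
      + ((B \ A).filter (fun e => (TT A B).min' hT < ckey (Dset A B) e)).card := by
    rw [symmdiff_eq_union, card_union_of_disjoint disjoint_sdiff_sdiff,
      flp_sdiff_left hT hA hB]
  have c2 : (B ∆ flp A B).card = (B \ flp A B).card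
      + ((A \ B).filter (fun e => (TT A B).min' hT < ckey (Dset A B) e)).card := by
    rw [symmdiff_eq_union, card_union_of_disjoint disjoint_sdiff_sdiff,
      flp_sdiff_right hT hA hB]
  constructor <;> omega


lemma weight_psi (hT : (TT A B).Nonempty) (hA : IsMatchingSet G A) (hB : IsMatchingSet G B)
    (lam : Sym2 V → ℝ) :
    (∏ e ∈ A ∆ flp A B, lam e) * ∏ e ∈ B ∆ flp A B, lam e
      = (∏ e ∈ A, lam e) * ∏ e ∈ B, lam e := by
  classical
  have hPA : ∏ e ∈ A ∆ flp A B, lam e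
      = (∏ e ∈ A \ flp A B, lam e) * ∏ e ∈ flp A B \ A, lam e := by
    rw [symmdiff_eq_union, prod_union disjoint_sdiff_sdiff]
  have hPB : ∏ e ∈ B ∆ flp A B, lam e
      = (∏ e ∈ B \ flp A B, lam e) * ∏ e ∈ flp A B \ B, lam e := by
    rw [symmdiff_eq_union, prod_union disjoint_sdiff_sdiff]
  have hFA : flp A B \ A = B ∩ flp A B := by
    rw [flp_sdiff_left hT hA hB, flp_inter_right hT hA hB]
  have hFB : flp A B \ B = A ∩ flp A B := by
    rw [flp_sdiff_right hT hA hB, flp_inter_left hT hA hB]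
  have hA' : (∏ e ∈ A \ flp A B, lam e) * ∏ e ∈ A ∩ flp A B, lam e = ∏ e ∈ A, lam e := by
    rw [← Finset.sdiff_inter_self_left A (flp A B)]
    exact Finset.prod_sdiff inter_subset_left
  have hB' : (∏ e ∈ B \ flp A B, lam e) * ∏ e ∈ B ∩ flp A B, lam e = ∏ e ∈ B, lam e := by
    rw [← Finset.sdiff_inter_self_left B (flp A B)]
    exact Finset.prod_sdiff inter_subset_left
  rw [hPA, hPB, hFA, hFB, ← hA', ← hB']
  ring

lemma psi_psi (hT : (TT A B).Nonempty) (hA : IsMatchingSet G A) (hB : IsMatchingSet G B) :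
    psi (psi (A, B)) = (A, B) := by
  classical
  set P := A ∆ flp A B with hPdef
  set Q := B ∆ flp A B with hQdef
  have hD : Dset P Q = Dset A B := by
    rw [hPdef, hQdef]
    show (A ∆ flp A B) ∆ (B ∆ flp A B) = A ∆ B
    rw [symmDiff_assoc, symmDiff_comm B (flp A B), symmDiff_symmDiff_cancel_left]
  have hPF : ∀ {e : Sym2 V}, e ∈ flp A B → (e ∈ P ↔ e ∉ A) := by
    intro e he
    simp [hPdef, Finset.mem_symmDiff, he]
  have hPNF : ∀ {e : Sym2 V}, e ∉ flp A B → (e ∈ P ↔ e ∈ A) := by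
    intro e he
    simp [hPdef, Finset.mem_symmDiff, he]
  have hQF : ∀ {e : Sym2 V}, e ∈ flp A B → (e ∈ Q ↔ e ∉ B) := by
    intro e he
    simp [hQdef, Finset.mem_symmDiff, he]
  have hQNF : ∀ {e : Sym2 V}, e ∉ flp A B → (e ∈ Q ↔ e ∈ B) := by
    intro e he
    simp [hQdef, Finset.mem_symmDiff, he]
  have eps_eq : ∀ t, eps P Q t
      = if (TT A B).min' hT < t then - eps A B t else eps A B t := by
    intro t
    unfold eps
    rw [hD]
    by_cases hκt : (TT A B).min' hT < t
    · rw [if_pos hκt]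
      have hQP : (Q \ P).filter (fun e => ckey (Dset A B) e = t)
          = (A \ B).filter (fun e => ckey (Dset A B) e = t) := by
        ext e
        simp only [mem_filter, mem_sdiff]
        constructor
        · rintro ⟨⟨heQ, heP⟩, het⟩
          have heD : e ∈ Dset A B := by
            rw [← hD]
            exact mem_Dset.2 (Or.inr ⟨heQ, heP⟩)
          have heF : e ∈ flp A B := (mem_flp_iff hT heD).2 (by rw [het]; exact hκt)
          have heB : e ∉ B := (hQF heF).1 heQ
          have heA : e ∈ A := by
            by_contra heA
            exact heP ((hPF heF).2 heA)
          exact ⟨⟨heA, heB⟩, het⟩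
        · rintro ⟨⟨heA, heB⟩, het⟩
          have heD : e ∈ Dset A B := mem_Dset.2 (Or.inl ⟨heA, heB⟩)
          have heF : e ∈ flp A B := (mem_flp_iff hT heD).2 (by rw [het]; exact hκt)
          exact ⟨⟨(hQF heF).2 heB, fun hP => (hPF heF).1 hP heA⟩, het⟩
      have hPQ : (P \ Q).filter (fun e => ckey (Dset A B) e = t)
          = (B \ A).filter (fun e => ckey (Dset A B) e = t) := by
        ext e
        simp only [mem_filter, mem_sdiff]
        constructor
        · rintro ⟨⟨heP, heQ⟩, het⟩
          have heD : e ∈ Dset A B := by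
            rw [← hD]
            exact mem_Dset.2 (Or.inl ⟨heP, heQ⟩)
          have heF : e ∈ flp A B := (mem_flp_iff hT heD).2 (by rw [het]; exact hκt)
          have heA : e ∉ A := (hPF heF).1 heP
          have heB : e ∈ B := by
            by_contra heB
            exact heQ ((hQF heF).2 heB)
          exact ⟨⟨heB, heA⟩, het⟩
        · rintro ⟨⟨heB, heA⟩, het⟩
          have heD : e ∈ Dset A B := mem_Dset.2 (Or.inr ⟨heB, heA⟩)
          have heF : e ∈ flp A B := (mem_flp_iff hT heD).2 (by rw [het]; exact hκt)
          exact ⟨⟨(hPF heF).2 heA, fun hQ => (hQF heF).1 hQ heB⟩, het⟩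
      rw [hQP, hPQ]
      ring
    · rw [if_neg hκt]
      have hQP : (Q \ P).filter (fun e => ckey (Dset A B) e = t)
          = (B \ A).filter (fun e => ckey (Dset A B) e = t) := by
        ext e
        simp only [mem_filter, mem_sdiff]
        constructor
        · rintro ⟨⟨heQ, heP⟩, het⟩
          have heD : e ∈ Dset A B := by
            rw [← hD]
            exact mem_Dset.2 (Or.inr ⟨heQ, heP⟩)
          have heF : e ∉ flp A B := fun hF =>
            hκt (by rw [← het]; exact (mem_flp_iff hT heD).1 hF)
          exact ⟨⟨(hQNF heF).1 heQ, fun hA' => heP ((hPNF heF).2 hA')⟩, het⟩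
        · rintro ⟨⟨heB, heA⟩, het⟩
          have heD : e ∈ Dset A B := mem_Dset.2 (Or.inr ⟨heB, heA⟩)
          have heF : e ∉ flp A B := fun hF =>
            hκt (by rw [← het]; exact (mem_flp_iff hT heD).1 hF)
          exact ⟨⟨(hQNF heF).2 heB, fun hP => heA ((hPNF heF).1 hP)⟩, het⟩
      have hPQ : (P \ Q).filter (fun e => ckey (Dset A B) e = t)
          = (A \ B).filter (fun e => ckey (Dset A B) e = t) := by
        ext e
        simp only [mem_filter, mem_sdiff]
        constructor
        · rintro ⟨⟨heP, heQ⟩, het⟩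
          have heD : e ∈ Dset A B := by
            rw [← hD]
            exact mem_Dset.2 (Or.inl ⟨heP, heQ⟩)
          have heF : e ∉ flp A B := fun hF =>
            hκt (by rw [← het]; exact (mem_flp_iff hT heD).1 hF)
          exact ⟨⟨(hPNF heF).1 heP, fun hB' => heQ ((hQNF heF).2 hB')⟩, het⟩
        · rintro ⟨⟨heA, heB⟩, het⟩
          have heD : e ∈ Dset A B := mem_Dset.2 (Or.inl ⟨heA, heB⟩)
          have heF : e ∉ flp A B := fun hF =>
            hκt (by rw [← het]; exact (mem_flp_iff hT heD).1 hF)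
          exact ⟨⟨(hPNF heF).2 heA, fun hQ => heB ((hQNF heF).1 hQ)⟩, het⟩
      rw [hQP, hPQ]
  have hkeys : keys P Q = keys A B := by
    unfold keys
    rw [hD]
  have hqf : ∀ t, t ≤ (TT A B).min' hT → qf P Q t = qf A B t := by
    intro t hle
    unfold qf
    rw [hkeys]
    apply Finset.sum_congr rfl
    intro s hs
    have hs' : s ≤ t := (mem_filter.1 hs).2
    rw [eps_eq s, if_neg (by omega)]
  have hκkeys : (TT A B).min' hT ∈ keys A B :=
    (mem_filter.1 ((TT A B).min'_mem hT)).1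
  have hqκ : qf P Q ((TT A B).min' hT) = 1 := by
    rw [hqf _ le_rfl]
    exact q_min_eq_one hT hA hB
  have hκTP : (TT A B).min' hT ∈ TT P Q := by
    refine mem_filter.2 ⟨by rw [hkeys]; exact hκkeys, by rw [hqκ]⟩
  have hTP : (TT P Q).Nonempty := ⟨_, hκTP⟩
  have hminP : (TT P Q).min' hTP = (TT A B).min' hT := by
    refine le_antisymm ((TT P Q).min'_le _ hκTP) ?_
    by_contra h
    push_neg at h
    have htm := (TT P Q).min'_mem hTP
    have htkeys : (TT P Q).min' hTP ∈ keys A B := by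
      rw [← hkeys]
      exact (mem_filter.1 htm).1
    have h1 : 1 ≤ qf P Q ((TT P Q).min' hTP) := (mem_filter.1 htm).2
    rw [hqf _ (le_of_lt h)] at h1
    have h2 := q_lt_nonpos hT htkeys h
    omega
  have hflp : flp P Q = flp A B := by
    rw [flp_eq hTP, hD, hminP, flp_eq hT]
  show (P ∆ flp P Q, Q ∆ flp P Q) = (A, B)
  rw [hflp, hPdef, hQdef, symmDiff_symmDiff_cancel_right, symmDiff_symmDiff_cancel_right]

lemma main_step (G : SimpleGraph V) (A B : Finset (Sym2 V))
    (hA : IsMatchingSet G A) (hB : IsMatchingSet G B) (hcard : B.card = A.card + 2)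
    (lam : Sym2 V → ℝ) :
    IsMatchingSet G (psi (A, B)).1 ∧ IsMatchingSet G (psi (A, B)).2 ∧
    (psi (A, B)).1.card = A.card + 1 ∧ (psi (A, B)).2.card + 1 = B.card ∧
    psi (psi (A, B)) = (A, B) ∧
    (∏ e ∈ (psi (A, B)).1, lam e) * ∏ e ∈ (psi (A, B)).2, lam e
      = (∏ e ∈ A, lam e) * ∏ e ∈ B, lam e := by
  have hT := TT_nonempty hcard
  obtain ⟨m1, m2⟩ := matching_symmdiff hT hA hB
  obtain ⟨c1, c2⟩ := cards_psi hT hA hB hcard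
  exact ⟨m1, m2, c1, c2, psi_psi hT hA hB, weight_psi hT hA hB lam⟩

end Flip

end LogConcAux


/-- For any finite simple graph `G = (V,E)` with nonnegative edge weights `(λ_e)_{e∈E}`,
the weighted matching counts are log-concave: for every `k ≥ 1`,
`Z_{k-1}·Z_{k+1} ≤ Z_k²`. -/
theorem stmt7 {V : Type*} [Fintype V] (G : SimpleGraph V) (lam : Sym2 V → ℝ)
    (hlam : ∀ e ∈ G.edgeSet, 0 ≤ lam e) (k : ℕ) (hk : 1 ≤ k) :
    Zw G lam (k - 1) * Zw G lam (k + 1) ≤ Zw G lam k ^ 2 := by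
  classical
  obtain ⟨m, rfl⟩ : ∃ m, k = m + 1 := ⟨k - 1, by omega⟩
  simp only [Nat.add_sub_cancel]
  set Ak := Finset.univ.filter
    (fun M : Finset (Sym2 V) => IsMatchingSet G M ∧ M.card = m) with hAk
  set Bk := Finset.univ.filter
    (fun M : Finset (Sym2 V) => IsMatchingSet G M ∧ M.card = m + 1 + 1) with hBk
  set Ck := Finset.univ.filter
    (fun M : Finset (Sym2 V) => IsMatchingSet G M ∧ M.card = m + 1) with hCk
  have hstep : ∀ p ∈ Ak ×ˢ Bk,
      LogConcAux.psi p ∈ Ck ×ˢ Ck ∧ LogConcAux.psi (LogConcAux.psi p) = p ∧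
      (∏ e ∈ (LogConcAux.psi p).1, lam e) * ∏ e ∈ (LogConcAux.psi p).2, lam e
        = (∏ e ∈ p.1, lam e) * ∏ e ∈ p.2, lam e := by
    intro p hp
    obtain ⟨hp1, hp2⟩ := Finset.mem_product.1 hp
    obtain ⟨hM, hMc⟩ := (Finset.mem_filter.1 hp1).2
    obtain ⟨hN, hNc⟩ := (Finset.mem_filter.1 hp2).2
    have hcard : p.2.card = p.1.card + 2 := by omega
    have hmain := LogConcAux.main_step G p.1 p.2 hM hN hcard lam
    rw [Prod.mk.eta] at hmain
    obtain ⟨hm1, hm2, hc1, hc2, hpp, hw⟩ := hmain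
    refine ⟨Finset.mem_product.2 ⟨?_, ?_⟩, hpp, hw⟩
    · exact Finset.mem_filter.2 ⟨Finset.mem_univ _, hm1, by omega⟩
    · exact Finset.mem_filter.2 ⟨Finset.mem_univ _, hm2, by omega⟩
  have hinj : ∀ p ∈ Ak ×ˢ Bk, ∀ q ∈ Ak ×ˢ Bk,
      LogConcAux.psi p = LogConcAux.psi q → p = q := by
    intro p hp q hq h
    have h1 := (hstep p hp).2.1
    have h2 := (hstep q hq).2.1
    rw [← h1, ← h2, h]
  have hL : Zw G lam m * Zw G lam (m + 1 + 1)
      = ∑ p ∈ Ak ×ˢ Bk, (∏ e ∈ p.1, lam e) * ∏ e ∈ p.2, lam e := by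
    rw [Zw, Zw, Finset.sum_mul_sum, ← hAk, ← hBk]
    exact (Finset.sum_product (s := Ak) (t := Bk)
      (f := fun p => (∏ e ∈ p.1, lam e) * ∏ e ∈ p.2, lam e)).symm
  have hR : Zw G lam (m + 1) ^ 2
      = ∑ p ∈ Ck ×ˢ Ck, (∏ e ∈ p.1, lam e) * ∏ e ∈ p.2, lam e := by
    rw [Zw, sq, Finset.sum_mul_sum, ← hCk]
    exact (Finset.sum_product (s := Ck) (t := Ck)
      (f := fun p => (∏ e ∈ p.1, lam e) * ∏ e ∈ p.2, lam e)).symm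
  rw [hL, hR]
  calc ∑ p ∈ Ak ×ˢ Bk, (∏ e ∈ p.1, lam e) * ∏ e ∈ p.2, lam e
      = ∑ p ∈ Ak ×ˢ Bk,
          ((∏ e ∈ (LogConcAux.psi p).1, lam e) * ∏ e ∈ (LogConcAux.psi p).2, lam e) :=
        Finset.sum_congr rfl (fun p hp => ((hstep p hp).2.2).symm)
    _ = ∑ q ∈ (Ak ×ˢ Bk).image LogConcAux.psi,
          (∏ e ∈ q.1, lam e) * ∏ e ∈ q.2, lam e := by
        rw [Finset.sum_image hinj]
    _ ≤ ∑ q ∈ Ck ×ˢ Ck, (∏ e ∈ q.1, lam e) * ∏ e ∈ q.2, lam e := by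
        apply Finset.sum_le_sum_of_subset_of_nonneg
        · exact Finset.image_subset_iff.2 (fun p hp => (hstep p hp).1)
        · intro q hq _
          obtain ⟨hq1, hq2⟩ := Finset.mem_product.1 hq
          obtain ⟨hM, _⟩ := (Finset.mem_filter.1 hq1).2
          obtain ⟨hN, _⟩ := (Finset.mem_filter.1 hq2).2
          apply mul_nonneg <;>
            exact Finset.prod_nonneg (fun e he => hlam e (by first | exact hM.1 e he | exact hN.1 e he))
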